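/- (Primitivity of the multi-step influence matrix.) Suppose α_i ∈ (0,1) for every i ∈ {1,…,n}. Then for every integer K ≥ 1 the matrix Ψ_K = Σ_{k=0}^{K−1} (Λ_α W)^k (I − Λ_α) + (Λ_α W)^K is primitive, and the matrix Ψ_∞ = Σ_{k=0}^{∞} (Λ_α W)^k (I − Λ_α) is primitive. -/

import Mathlib

open Matrix Filter Topology

/-- Row-normalized adjacency matrix `W = deg⁻¹ A` of a simple graph. -/
noncomputable def rowNormAdj {n : ℕ} (G : SimpleGraph (Fin n)) [DecidableRel G.Adj] :
    Matrix (Fin n) (Fin n) ℝ :=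
  Matrix.of fun i j => (G.adjMatrix ℝ) i j / (G.degree i : ℝ)

/-- The multi-step influence matrix
`Ψ_K = Σ_{k=0}^{K−1} (Λ_α W)^k (I − Λ_α) + (Λ_α W)^K`. -/
noncomputable def Psi {n : ℕ} (K : ℕ) (α : Fin n → ℝ) (W : Matrix (Fin n) (Fin n) ℝ) :
    Matrix (Fin n) (Fin n) ℝ :=
  (∑ k ∈ Finset.range K, (Matrix.diagonal α * W) ^ k * (1 - Matrix.diagonal α))
    + (Matrix.diagonal α * W) ^ K

/-- A nonnegative square matrix is irreducible: for every pair `(i,j)` some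
power has a strictly positive `(i,j)` entry. -/
def IsIrreducibleMat {n : ℕ} (M : Matrix (Fin n) (Fin n) ℝ) : Prop :=
  ∀ i j, ∃ m : ℕ, 1 ≤ m ∧ 0 < (M ^ m) i j

/-- A nonnegative square matrix is primitive: some power is entrywise strictly
positive. -/
def IsPrimitiveMat {n : ℕ} (M : Matrix (Fin n) (Fin n) ℝ) : Prop :=
  ∃ m : ℕ, 1 ≤ m ∧ ∀ i j, 0 < (M ^ m) i j

/-- The infinite-horizon influence matrix `Ψ_∞ = Σ_{k=0}^∞ (Λ_α W)^k (I − Λ_α)`. -/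
noncomputable def PsiInf {n : ℕ} (α : Fin n → ℝ) (W : Matrix (Fin n) (Fin n) ℝ) :
    Matrix (Fin n) (Fin n) ℝ :=
  ∑' k : ℕ, (Matrix.diagonal α * W) ^ k * (1 - Matrix.diagonal α)

section Aux

variable {n : ℕ}

lemma pow_entry_nonneg (M : Matrix (Fin n) (Fin n) ℝ) (hM : ∀ i j, 0 ≤ M i j) :
    ∀ m i j, 0 ≤ (M ^ m) i j := by
  intro m
  induction m with
  | zero =>
    intro i j
    rw [pow_zero]
    rcases eq_or_ne i j with h | h <;> simp [Matrix.one_apply, h]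
  | succ k ih =>
    intro i j
    rw [pow_succ, Matrix.mul_apply]
    exact Finset.sum_nonneg fun c _ => mul_nonneg (ih i c) (hM c j)

lemma pow_diag_pos (M : Matrix (Fin n) (Fin n) ℝ) (hM : ∀ i j, 0 ≤ M i j)
    (hd : ∀ i, 0 < M i i) : ∀ m i, 0 < (M ^ m) i i := by
  intro m
  induction m with
  | zero => intro i; simp [Matrix.one_apply]
  | succ k ih =>
    intro i
    rw [pow_succ, Matrix.mul_apply]
    refine Finset.sum_pos' (fun c _ => mul_nonneg (pow_entry_nonneg M hM k i c) (hM c i)) ?_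
    exact ⟨i, Finset.mem_univ i, mul_pos (ih i) (hd i)⟩

lemma walk_pow_pos (G : SimpleGraph (Fin n)) (M : Matrix (Fin n) (Fin n) ℝ)
    (hM : ∀ i j, 0 ≤ M i j) (hadj : ∀ i j, G.Adj i j → 0 < M i j) :
    ∀ {i j : Fin n} (p : G.Walk i j), 0 < (M ^ p.length) i j := by
  intro i j p
  induction p with
  | nil => simp [Matrix.one_apply]
  | @cons u v w h q ih =>
    rw [SimpleGraph.Walk.length_cons, pow_succ', Matrix.mul_apply]
    refine Finset.sum_pos' (fun c _ => mul_nonneg (hM u c) (pow_entry_nonneg M hM _ c w)) ?_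
    exact ⟨v, Finset.mem_univ v, mul_pos (hadj u v h) ih⟩

lemma pow_pos_of_connected (G : SimpleGraph (Fin n)) [DecidableRel G.Adj]
    (hG : G.Connected) (M : Matrix (Fin n) (Fin n) ℝ)
    (hM : ∀ i j, 0 ≤ M i j) (hd : ∀ i, 0 < M i i)
    (hadj : ∀ i j, G.Adj i j → 0 < M i j) :
    ∀ i j, 0 < (M ^ n) i j := by
  intro i j
  obtain ⟨w⟩ := hG.preconnected i j
  set p := w.toPath with hp
  have hlen : (p : G.Walk i j).length < n := by
    have := (p.2).length_lt
    simpa using this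
  have hle : (p : G.Walk i j).length ≤ n := hlen.le
  have hsplit : M ^ n = M ^ (n - (p : G.Walk i j).length) * M ^ (p : G.Walk i j).length := by
    rw [← pow_add, Nat.sub_add_cancel hle]
  rw [hsplit, Matrix.mul_apply]
  refine Finset.sum_pos' (fun c _ => mul_nonneg (pow_entry_nonneg M hM _ i c)
    (pow_entry_nonneg M hM _ c j)) ?_
  exact ⟨i, Finset.mem_univ i, mul_pos (pow_diag_pos M hM hd _ i) (walk_pow_pos G M hM hadj _)⟩

lemma degree_pos (hn : 2 ≤ n) (G : SimpleGraph (Fin n)) [DecidableRel G.Adj]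
    (hG : G.Connected) (i : Fin n) : 0 < G.degree i := by
  rw [SimpleGraph.degree_pos_iff_exists_adj]
  obtain ⟨j, hj⟩ := Fintype.exists_ne_of_one_lt_card (by simp; omega) i
  obtain ⟨w⟩ := hG.preconnected i j
  cases w with
  | nil => exact absurd rfl hj
  | cons h q => exact ⟨_, h⟩

lemma rowNormAdj_nonneg (G : SimpleGraph (Fin n)) [DecidableRel G.Adj] (i j : Fin n) :
    0 ≤ rowNormAdj G i j := by
  unfold rowNormAdj
  simp only [Matrix.of_apply, SimpleGraph.adjMatrix_apply]
  positivity

lemma rowNormAdj_pos (hn : 2 ≤ n) (G : SimpleGraph (Fin n)) [DecidableRel G.Adj]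
    (hG : G.Connected) {i j : Fin n} (h : G.Adj i j) : 0 < rowNormAdj G i j := by
  unfold rowNormAdj
  simp only [Matrix.of_apply, SimpleGraph.adjMatrix_apply, if_pos h]
  have := degree_pos hn G hG i
  positivity

lemma rowNormAdj_row_sum (hn : 2 ≤ n) (G : SimpleGraph (Fin n)) [DecidableRel G.Adj]
    (hG : G.Connected) (i : Fin n) : ∑ j, rowNormAdj G i j = 1 := by
  unfold rowNormAdj
  simp only [Matrix.of_apply, SimpleGraph.adjMatrix_apply]
  rw [← Finset.sum_div, Finset.sum_boole]
  have hd := degree_pos hn G hG i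
  rw [SimpleGraph.degree] at *
  rw [SimpleGraph.neighborFinset_eq_filter] at *
  rw [div_eq_one_iff_eq (by exact_mod_cast hd.ne')]

lemma one_sub_diag (α : Fin n → ℝ) : (1 : Matrix (Fin n) (Fin n) ℝ) - Matrix.diagonal α
    = Matrix.diagonal (fun i => 1 - α i) := by
  rw [← Matrix.diagonal_one, Matrix.diagonal_sub]

lemma term_apply (α : Fin n → ℝ) (W : Matrix (Fin n) (Fin n) ℝ) (k : ℕ) (i j : Fin n) :
    ((Matrix.diagonal α * W) ^ k * (1 - Matrix.diagonal α)) i j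
      = ((Matrix.diagonal α * W) ^ k) i j * (1 - α j) := by
  rw [one_sub_diag, Matrix.mul_diagonal]

end Aux

/-- primitivity of the multi-step influence matrix.  If
`α_i ∈ (0,1)` for every `i`, then `Ψ_K` is primitive for every `K ≥ 1`, and
`Ψ_∞` is primitive. -/
theorem psi_primitive {n : ℕ} (hn : 2 ≤ n) (G : SimpleGraph (Fin n))
    [DecidableRel G.Adj] (hG : G.Connected)
    (α : Fin n → ℝ) (hα : ∀ i, α i ∈ Set.Ioo (0 : ℝ) 1) :
    (∀ K : ℕ, 1 ≤ K → IsPrimitiveMat (Psi K α (rowNormAdj G))) ∧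
      IsPrimitiveMat (PsiInf α (rowNormAdj G)) := by
  set W := rowNormAdj G with hW
  set M := Matrix.diagonal α * W with hM
  have hWnn : ∀ i j, 0 ≤ W i j := rowNormAdj_nonneg G
  have hMnn : ∀ i j, 0 ≤ M i j := fun i j => by
    rw [hM, Matrix.diagonal_mul]
    exact mul_nonneg (hα i).1.le (hWnn i j)
  have hMadj : ∀ i j, G.Adj i j → 0 < M i j := fun i j h => by
    rw [hM, Matrix.diagonal_mul]
    exact mul_pos (hα i).1 (rowNormAdj_pos hn G hG h)
  have hMpownn := pow_entry_nonneg M hMnn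
  have hrow : ∀ i, ∑ j, M i j = α i := fun i => by
    simp only [hM, Matrix.diagonal_mul, ← Finset.mul_sum]
    rw [rowNormAdj_row_sum hn G hG i, mul_one]
  -- entries of the K-step matrix
  have hPsi_apply : ∀ K i j, Psi K α W i j
      = (∑ k ∈ Finset.range K, ((M ^ k) i j * (1 - α j))) + (M ^ K) i j := fun K i j => by
    rw [Psi, Matrix.add_apply, Matrix.sum_apply]
    simp_rw [term_apply α W]
    rfl
  have hsub : ∀ j, (0:ℝ) < 1 - α j := fun j => by linarith [(hα j).2]
  -- Positivity pattern of Psi K.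
  have hPsiK : ∀ K : ℕ, 1 ≤ K → IsPrimitiveMat (Psi K α W) := by
    intro K hK
    have hnn : ∀ i j, 0 ≤ Psi K α W i j := fun i j => by
      rw [hPsi_apply]
      exact add_nonneg (Finset.sum_nonneg fun k _ =>
        mul_nonneg (hMpownn k i j) (hsub j).le) (hMpownn K i j)
    have hdiag : ∀ i, 0 < Psi K α W i i := fun i => by
      rw [hPsi_apply]
      refine add_pos_of_pos_of_nonneg (Finset.sum_pos'
        (fun k _ => mul_nonneg (hMpownn k i i) (hsub i).le) ?_) (hMpownn K i i)
      refine ⟨0, Finset.mem_range.mpr hK, ?_⟩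
      simp [Matrix.one_apply, hsub i]
    have hadj : ∀ i j, G.Adj i j → 0 < Psi K α W i j := fun i j h => by
      rw [hPsi_apply]
      rcases eq_or_lt_of_le hK with hK1 | hK2
      · refine add_pos_of_nonneg_of_pos (Finset.sum_nonneg fun k _ =>
          mul_nonneg (hMpownn k i j) (hsub j).le) ?_
        rw [← hK1, pow_one]
        exact hMadj i j h
      · refine add_pos_of_pos_of_nonneg (Finset.sum_pos'
          (fun k _ => mul_nonneg (hMpownn k i j) (hsub j).le) ?_) (hMpownn K i j)
        refine ⟨1, Finset.mem_range.mpr hK2, ?_⟩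
        rw [pow_one]
        exact mul_pos (hMadj i j h) (hsub j)
    exact ⟨n, by omega, pow_pos_of_connected G hG _ hnn hdiag hadj⟩
  -- geometric bound on powers of M
  haveI : NeZero n := ⟨by omega⟩
  set a : ℝ := Finset.univ.sup' Finset.univ_nonempty α with ha
  have ha_le : ∀ i, α i ≤ a := fun i => Finset.le_sup' α (Finset.mem_univ i)
  have ha0 : 0 < a := lt_of_lt_of_le (hα ⟨0, by omega⟩).1 (ha_le _)
  have ha1 : a < 1 := by
    obtain ⟨i0, _, hi0⟩ := Finset.exists_mem_eq_sup' Finset.univ_nonempty α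
    rw [ha, hi0]; exact (hα i0).2
  have hpow_le : ∀ k i j, (M ^ k) i j ≤ a ^ k := by
    intro k
    induction k with
    | zero =>
      intro i j
      rw [pow_zero, pow_zero]
      rcases eq_or_ne i j with h | h <;> simp [Matrix.one_apply, h]
    | succ k ih =>
      intro i j
      rw [pow_succ', Matrix.mul_apply]
      calc ∑ c, M i c * (M ^ k) c j
          ≤ ∑ c, M i c * a ^ k := Finset.sum_le_sum fun c _ =>
            mul_le_mul_of_nonneg_left (ih c j) (hMnn i c)
        _ = α i * a ^ k := by rw [← Finset.sum_mul, hrow]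
        _ ≤ a * a ^ k := mul_le_mul_of_nonneg_right (ha_le i) (pow_nonneg ha0.le k)
        _ = a ^ (k + 1) := (pow_succ' a k).symm
  have hsum_entry : ∀ i j, Summable fun k : ℕ => (M ^ k) i j * (1 - α j) := by
    intro i j
    refine Summable.of_nonneg_of_le (fun k => mul_nonneg (hMpownn k i j) (hsub j).le)
      (fun k => ?_) (summable_geometric_of_lt_one ha0.le ha1)
    calc (M ^ k) i j * (1 - α j) ≤ (M ^ k) i j * 1 :=
          mul_le_mul_of_nonneg_left (by linarith [(hα j).1]) (hMpownn k i j)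
      _ = (M ^ k) i j := mul_one _
      _ ≤ a ^ k := hpow_le k i j
  have hsumM : Summable (fun k : ℕ => M ^ k * (1 - Matrix.diagonal α)) := by
    refine Pi.summable.mpr fun i => Pi.summable.mpr fun j => ?_
    exact (hsum_entry i j).congr fun k => (term_apply α W k i j).symm
  have hInf_apply : ∀ i j, PsiInf α W i j = ∑' k : ℕ, (M ^ k) i j * (1 - α j) := by
    intro i j
    rw [PsiInf]
    exact ((congrFun (tsum_apply hsumM) j).trans (tsum_apply (Pi.summable.mp hsumM i))).trans
      (tsum_congr fun k => term_apply α W k i j)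
  have hInf_nn : ∀ i j, 0 ≤ PsiInf α W i j := fun i j => by
    rw [hInf_apply]
    exact tsum_nonneg fun k => mul_nonneg (hMpownn k i j) (hsub j).le
  have hInf_diag : ∀ i, 0 < PsiInf α W i i := fun i => by
    rw [hInf_apply]
    have h0 : (0:ℝ) < (M ^ 0) i i * (1 - α i) := by
      simp [Matrix.one_apply, hsub i]
    exact lt_of_lt_of_le h0 (Summable.le_tsum (hsum_entry i i) 0
      fun k _ => mul_nonneg (hMpownn k i i) (hsub i).le)
  have hInf_adj : ∀ i j, G.Adj i j → 0 < PsiInf α W i j := fun i j h => by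
    rw [hInf_apply]
    have h1 : (0:ℝ) < (M ^ 1) i j * (1 - α j) := by
      rw [pow_one]; exact mul_pos (hMadj i j h) (hsub j)
    exact lt_of_lt_of_le h1 (Summable.le_tsum (hsum_entry i j) 1
      fun k _ => mul_nonneg (hMpownn k i j) (hsub j).le)
  exact ⟨hPsiK, ⟨n, by omega, pow_pos_of_connected G hG _ hInf_nn hInf_diag hInf_adj⟩⟩
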